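/- For every node Q_i of a 3-dimensional toric idealistic cluster A=(C,m) one has R_i = 3·m_i − 2·Σ_{j→i} m_j + Σ_{j→i} (Σ_{k: k→i and k↠j} m_k) + Σ_{j: i→j} (Σ_{k: k→j and k↠i} m_k) − Σ_{j: i→j} m_i. -/

import Mathlib

open Finset

/-!
Common framework: 3-dimensional toric constellations and toric idealistic clusters.
The edge labels `1, 2, 3` of the paper are encoded as `0, 1, 2 : Fin 3`.
-/

/-- A 3-dimensional toric constellation: a finite rooted tree on nodes `0, …, r−1`
(node `0` the root, every child having larger index than its parent), each node having
at most three children, the edges from a node to its children carrying pairwise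
distinct labels in `Fin 3`.  `label j` is the label of the edge from `parent j` to `j`
(irrelevant for the root). -/
structure ToricConstellation (r : ℕ) where
  parent : Fin r → Fin r
  label : Fin r → Fin 3
  parent_lt : ∀ i : Fin r, 0 < (i : ℕ) → (parent i : ℕ) < (i : ℕ)
  parent_root : ∀ i : Fin r, (i : ℕ) = 0 → parent i = i
  label_distinct : ∀ i j : Fin r, 0 < (i : ℕ) → 0 < (j : ℕ) → i ≠ j →
    parent i = parent j → label i ≠ label j

namespace ToricConstellation

variable {r : ℕ}

/-- The ordered triple of vectors of `ℤ³` attached to a node: the root carries the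
standard basis, and the child along the edge labelled `a` of a node with cone
`(u₁,u₂,u₃)` carries the triple obtained by replacing `u_a` with `u₁+u₂+u₃`. -/
def cone (C : ToricConstellation r) (i : Fin r) : Fin 3 → (Fin 3 → ℤ) :=
  if h : 0 < (i : ℕ) then
    Function.update (cone C (C.parent i)) (C.label i) (∑ a, cone C (C.parent i) a)
  else fun a => Pi.single a 1
termination_by (i : ℕ)
decreasing_by all_goals exact C.parent_lt i h

/-- `v(Q) = u₁ + u₂ + u₃`, the sum of the cone vectors of a node. -/
def v (C : ToricConstellation r) (i : Fin r) : Fin 3 → ℤ := ∑ a, cone C i a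

/-- `Prox C j i` means `j → i`, i.e. `Q_j` is proximate to `Q_i`:
`j ≠ i` and `v(Q_i)` is an entry of `cone(Q_j)`. -/
def Prox (C : ToricConstellation r) (j i : Fin r) : Prop :=
  j ≠ i ∧ ∃ a : Fin 3, cone C j a = v C i

instance (C : ToricConstellation r) (j i : Fin r) : Decidable (C.Prox j i) := by
  unfold Prox; infer_instance

/-- `inChain C i a b j = true` iff `j = Q_i(a, b^t)` for some `t ≥ 0`, i.e. `j` is
reached from `i` by one edge labelled `a` followed by `t` edges labelled `b`. -/
def inChain (C : ToricConstellation r) (i : Fin r) (a b : Fin 3) (j : Fin r) : Bool :=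
  if h : 0 < (j : ℕ) then
    (decide (C.parent j = i) && decide (C.label j = a)) ||
      (decide (C.label j = b) && inChain C i a b (C.parent j))
  else false
termination_by (j : ℕ)
decreasing_by exact C.parent_lt j h

/-- `LinProx C j i` means `j ↠ i`, i.e. `Q_j` is linearly proximate to `Q_i`. -/
def LinProx (C : ToricConstellation r) (j i : Fin r) : Prop :=
  ∃ a b : Fin 3, a ≠ b ∧ inChain C i a b j = true

instance (C : ToricConstellation r) (j i : Fin r) : Decidable (C.LinProx j i) := by
  unfold LinProx; infer_instance

/-- `j` is a child of `i`. -/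
def IsChild (C : ToricConstellation r) (j i : Fin r) : Prop :=
  0 < (j : ℕ) ∧ C.parent j = i

instance (C : ToricConstellation r) (j i : Fin r) : Decidable (C.IsChild j i) := by
  unfold IsChild; infer_instance

/-- The set `S_i` of labels of the edges on the path from the root to `Q_i`. -/
def labelsUnder (C : ToricConstellation r) (i : Fin r) : Finset (Fin 3) :=
  if h : 0 < (i : ℕ) then insert (C.label i) (labelsUnder C (C.parent i)) else ∅
termination_by (i : ℕ)
decreasing_by exact C.parent_lt i h

/-- `i` is a weak ancestor of `j` (`i = j` or `i` a strict ancestor of `j`). -/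
def anc (C : ToricConstellation r) (i j : Fin r) : Bool :=
  decide (i = j) || (if h : 0 < (j : ℕ) then anc C i (C.parent j) else false)
termination_by (j : ℕ)
decreasing_by exact C.parent_lt j h

/-- The set of nodes weakly above `i` (`i` together with its descendants). -/
def weakAbove (C : ToricConstellation r) (i : Fin r) : Finset (Fin r) :=
  univ.filter (fun j => anc C i j = true)

end ToricConstellation

/-- A 3-dimensional toric cluster: a toric constellation together with a positive
integer weight for each node. -/
structure ToricCluster (r : ℕ) extends ToricConstellation r where
  m : Fin r → ℤ
  m_pos : ∀ j, 0 < m j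

namespace ToricCluster

open ToricConstellation

variable {r : ℕ}

/-- `M_{Q_i}(a,b) := Σ_{t ≥ 0, Q_i(a,b^t) ∈ C} m_{Q_i(a,b^t)}`. -/
def M (A : ToricCluster r) (i : Fin r) (a b : Fin 3) : ℤ :=
  ∑ j ∈ univ.filter (fun j => inChain A.toToricConstellation i a b j = true), A.m j

/-- The cluster is idealistic: the linear proximity inequalities
`M_{Q_i}(a,b) + M_{Q_i}(b,a) ≤ m_{Q_i}` hold. -/
def Idealistic (A : ToricCluster r) : Prop :=
  ∀ i : Fin r, ∀ a b : Fin 3, a ≠ b → A.M i a b + A.M i b a ≤ A.m i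

/-- The set of nodes `j` proximate to `i` (`j → i`). -/
def proxSet (A : ToricCluster r) (i : Fin r) : Finset (Fin r) :=
  univ.filter (fun j => Prox A.toToricConstellation j i)

/-- `B_i`: the set of nodes to which `i` is proximate. -/
def Bset (A : ToricCluster r) (i : Fin r) : Finset (Fin r) :=
  univ.filter (fun j => Prox A.toToricConstellation i j)

/-- `A_i`: the children `k` of `i` for which there is no `l` with `i → l` and `k → l`. -/
def Aset (A : ToricCluster r) (i : Fin r) : Finset (Fin r) :=
  univ.filter (fun k => IsChild A.toToricConstellation k i ∧
    ¬ ∃ l, Prox A.toToricConstellation i l ∧ Prox A.toToricConstellation k l)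

/-- The Euler characteristic `χ_i = χ(E_i°)`. -/
def chi (A : ToricCluster r) (i : Fin r) : ℤ :=
  3 + A.m i * (A.m i - 3)
    - ∑ j ∈ A.proxSet i, A.m j * (A.m j - 1)
    + ∑ j ∈ A.proxSet i,
        (A.m j - ∑ k ∈ (A.proxSet i).filter
          (fun k => LinProx A.toToricConstellation k j), A.m k)
    + ∑ j ∈ A.Bset i,
        (A.m i - ∑ k ∈ (A.proxSet j).filter
          (fun k => LinProx A.toToricConstellation k i), A.m k)
    - ((A.Aset i).card : ℤ) - 2 * ((A.Bset i).card : ℤ)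
    + (((A.Bset i).card.choose 2 : ℕ) : ℤ)

/-- `D_i = m_i² − Σ_{j→i} m_j²`. -/
def D (A : ToricCluster r) (i : Fin r) : ℤ :=
  A.m i ^ 2 - ∑ j ∈ A.proxSet i, A.m j ^ 2

/-- `r_{ab} = m_i − M_{Q_i}(a,b) − M_{Q_i}(b,a)`. -/
def rab (A : ToricCluster r) (i : Fin r) (a b : Fin 3) : ℤ :=
  A.m i - A.M i a b - A.M i b a

/-- `R_i = r̂_{12} + r̂_{13} + r̂_{23}`, where `r̂_{ab} = r_{ab}` if the remaining third
label does not appear under `Q_i`, and `r̂_{ab} = 0` otherwise.  (Labels `1,2,3` are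
encoded as `0,1,2 : Fin 3`.) -/
def R (A : ToricCluster r) (i : Fin r) : ℤ :=
  (if (2 : Fin 3) ∉ labelsUnder A.toToricConstellation i then A.rab i 0 1 else 0)
  + (if (1 : Fin 3) ∉ labelsUnder A.toToricConstellation i then A.rab i 0 2 else 0)
  + (if (0 : Fin 3) ∉ labelsUnder A.toToricConstellation i then A.rab i 1 2 else 0)

/-- `T_i = 3 − #A_i − 2·#B_i + (#B_i choose 2)`. -/
def T (A : ToricCluster r) (i : Fin r) : ℤ :=
  3 - ((A.Aset i).card : ℤ) - 2 * ((A.Bset i).card : ℤ)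
    + (((A.Bset i).card.choose 2 : ℕ) : ℤ)

/-- The nodes to which `i` is proximate, of smaller index: the sums in the recursive
definitions of the numerical data range over the nodes to which `i` is proximate,
which are ancestors of `i` and hence have smaller index (making the recursion
well-founded). -/
def anteSet (A : ToricCluster r) (i : Fin r) : Finset (Fin r) :=
  univ.filter (fun j => (j : ℕ) < (i : ℕ) ∧ Prox A.toToricConstellation i j)

/-- The numerical datum `N_i := m_i + Σ_{j : i→j} N_j`. -/
def N (A : ToricCluster r) (i : Fin r) : ℤ :=
  A.m i + ∑ j ∈ (A.anteSet i).attach, N A j.1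
termination_by (i : ℕ)
decreasing_by
  have hj := j.2
  simp only [anteSet, Finset.mem_filter] at hj
  exact hj.2.1

/-- The numerical datum `ν_i := 3 + Σ_{j : i→j} (ν_j − 1)`. -/
def nu (A : ToricCluster r) (i : Fin r) : ℤ :=
  3 + ∑ j ∈ (A.anteSet i).attach, (nu A j.1 - 1)
termination_by (i : ℕ)
decreasing_by
  have hj := j.2
  simp only [anteSet, Finset.mem_filter] at hj
  exact hj.2.1

end ToricCluster


open ToricConstellation ToricCluster

namespace ToricConstellation

variable {r : ℕ} (C : ToricConstellation r)

/-- The last ancestor relevant to position `a`: walking up from `x`, the parent of the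
first node whose incoming edge is labelled `a`. -/
def lastRep (x : Fin r) (a : Fin 3) : Option (Fin r) :=
  if h : 0 < (x : ℕ) then
    (if C.label x = a then some (C.parent x) else lastRep (C.parent x) a)
  else none
termination_by (x : ℕ)
decreasing_by exact C.parent_lt x h

lemma lastRep_eq (x : Fin r) (a : Fin 3) :
    C.lastRep x a = if 0 < (x : ℕ) then
      (if C.label x = a then some (C.parent x) else C.lastRep (C.parent x) a)
    else none := by
  rw [lastRep]; split <;> simp_all

lemma lastRep_lt {x y : Fin r} {a : Fin 3} (h : C.lastRep x a = some y) :
    (y : ℕ) < (x : ℕ) := by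
  rw [lastRep_eq] at h
  by_cases hx : 0 < (x : ℕ)
  · rw [if_pos hx] at h
    by_cases hl : C.label x = a
    · rw [if_pos hl] at h
      cases h
      exact C.parent_lt x hx
    · rw [if_neg hl] at h
      exact lt_trans (lastRep_lt h) (C.parent_lt x hx)
  · rw [if_neg hx] at h; cases h
termination_by (x : ℕ)
decreasing_by exact C.parent_lt x hx

lemma lastRep_pos {x y : Fin r} {a : Fin 3} (h : C.lastRep x a = some y) :
    0 < (x : ℕ) := by
  rw [lastRep_eq] at h
  by_cases hx : 0 < (x : ℕ)
  · exact hx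
  · rw [if_neg hx] at h; cases h

lemma lastRep_uniq {x y : Fin r} {a a' : Fin 3} (h : C.lastRep x a = some y)
    (h' : C.lastRep x a' = some y) : a = a' := by
  have hx := C.lastRep_pos h
  rw [lastRep_eq, if_pos hx] at h h'
  by_cases hl : C.label x = a
  · rw [if_pos hl] at h
    by_cases hl' : C.label x = a'
    · rw [← hl, hl']
    · rw [if_neg hl'] at h'
      cases h
      exact absurd (C.lastRep_lt h') (lt_irrefl _)
  · rw [if_neg hl] at h
    by_cases hl' : C.label x = a'
    · rw [if_pos hl'] at h'
      cases h'
      exact absurd (C.lastRep_lt h) (lt_irrefl _)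
    · rw [if_neg hl'] at h'
      exact lastRep_uniq h h'
termination_by (x : ℕ)
decreasing_by exact C.parent_lt x hx

lemma labelsUnder_eq (x : Fin r) :
    C.labelsUnder x = if 0 < (x : ℕ) then
      insert (C.label x) (C.labelsUnder (C.parent x)) else ∅ := by
  rw [labelsUnder]; split <;> simp_all

lemma mem_labelsUnder_iff {x : Fin r} {a : Fin 3} :
    a ∈ C.labelsUnder x ↔ (C.lastRep x a).isSome := by
  rw [labelsUnder_eq, lastRep_eq]
  by_cases hx : 0 < (x : ℕ)
  · rw [if_pos hx, if_pos hx]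
    by_cases hl : C.label x = a
    · simp [hl]
    · rw [if_neg hl, Finset.mem_insert]
      have := mem_labelsUnder_iff (x := C.parent x) (a := a)
      simp only [this]
      constructor
      · rintro (h | h)
        · exact absurd h.symm hl
        · exact h
      · exact Or.inr
  · simp [hx]
termination_by (x : ℕ)
decreasing_by exact C.parent_lt x hx

end ToricConstellation
namespace ToricConstellation

variable {r : ℕ} (C : ToricConstellation r)

lemma inChain_eq (i : Fin r) (a b : Fin 3) (j : Fin r) :
    C.inChain i a b j = if 0 < (j : ℕ) then
      ((decide (C.parent j = i) && decide (C.label j = a)) ||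
        (decide (C.label j = b) && C.inChain i a b (C.parent j)))
    else false := by
  rw [inChain]; split <;> simp_all

lemma inChain_iff {i : Fin r} {a b : Fin 3} {j : Fin r} :
    C.inChain i a b j = true ↔ 0 < (j : ℕ) ∧
      ((C.parent j = i ∧ C.label j = a) ∨
        (C.label j = b ∧ C.inChain i a b (C.parent j) = true)) := by
  rw [inChain_eq]
  by_cases hj : 0 < (j : ℕ) <;> simp [hj]

lemma inChain_lastRep {i : Fin r} {a b : Fin 3} {j : Fin r} (hab : a ≠ b)
    (h : C.inChain i a b j = true) : C.lastRep j a = some i := by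
  rw [inChain_iff] at h
  obtain ⟨hj, h | h⟩ := h
  · rw [lastRep_eq, if_pos hj, if_pos h.2, h.1]
  · rw [lastRep_eq, if_pos hj, if_neg (by rw [h.1]; exact fun e => hab e.symm)]
    exact inChain_lastRep hab h.2
termination_by (j : ℕ)
decreasing_by exact C.parent_lt j hj

lemma inChain_lt {i : Fin r} {a b : Fin 3} {j : Fin r} (hab : a ≠ b)
    (h : C.inChain i a b j = true) : (i : ℕ) < (j : ℕ) :=
  C.lastRep_lt (C.inChain_lastRep hab h)

lemma lastRep_stable {i : Fin r} {a b : Fin 3} {j : Fin r} {c : Fin 3}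
    (h : C.inChain i a b j = true) (hca : c ≠ a) (hcb : c ≠ b) :
    C.lastRep j c = C.lastRep i c := by
  rw [inChain_iff] at h
  obtain ⟨hj, h | h⟩ := h
  · rw [lastRep_eq, if_pos hj, if_neg (by rw [h.2]; exact fun e => hca e.symm), h.1]
  · rw [lastRep_eq, if_pos hj, if_neg (by rw [h.1]; exact fun e => hcb e.symm)]
    exact lastRep_stable h.2 hca hcb
termination_by (j : ℕ)
decreasing_by exact C.parent_lt j hj

/-- Climb up from `x` while the incoming label equals `b`; return the parent of the
first node whose label differs. -/
def auxUp (b : Fin 3) (x : Fin r) : Option (Fin r) :=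
  if h : 0 < (x : ℕ) then
    (if C.label x = b then auxUp b (C.parent x) else some (C.parent x))
  else none
termination_by (x : ℕ)
decreasing_by exact C.parent_lt x h

lemma auxUp_eq (b : Fin 3) (x : Fin r) :
    C.auxUp b x = if 0 < (x : ℕ) then
      (if C.label x = b then C.auxUp b (C.parent x) else some (C.parent x))
    else none := by
  rw [auxUp]; split <;> simp_all

lemma auxUp_lt {b : Fin 3} {x y : Fin r} (h : C.auxUp b x = some y) :
    (y : ℕ) < (x : ℕ) := by
  rw [auxUp_eq] at h
  by_cases hx : 0 < (x : ℕ)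
  · rw [if_pos hx] at h
    by_cases hl : C.label x = b
    · rw [if_pos hl] at h
      exact lt_trans (auxUp_lt h) (C.parent_lt x hx)
    · rw [if_neg hl] at h; cases h; exact C.parent_lt x hx
  · rw [if_neg hx] at h; cases h
termination_by (x : ℕ)
decreasing_by exact C.parent_lt x hx

lemma inChain_auxUp {i : Fin r} {a b : Fin 3} {x : Fin r} (hab : a ≠ b)
    (h : C.inChain i a b x = true) : C.auxUp b x = some i := by
  rw [inChain_iff] at h
  obtain ⟨hx, h | h⟩ := h
  · rw [auxUp_eq, if_pos hx, if_neg (by rw [h.2]; exact hab), h.1]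
  · rw [auxUp_eq, if_pos hx, if_pos h.1]
    exact inChain_auxUp hab h.2
termination_by (x : ℕ)
decreasing_by exact C.parent_lt x hx

lemma auxUp_inChain {b : Fin 3} {x j : Fin r} (h : C.auxUp b x = some j) :
    ∃ α, α ≠ b ∧ C.inChain j α b x = true := by
  have hx : 0 < (x : ℕ) := by
    rw [auxUp_eq] at h
    by_cases hx : 0 < (x : ℕ)
    · exact hx
    · rw [if_neg hx] at h; cases h
  rw [auxUp_eq, if_pos hx] at h
  by_cases hl : C.label x = b
  · rw [if_pos hl] at h
    obtain ⟨α, hα, hc⟩ := auxUp_inChain h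
    exact ⟨α, hα, by rw [inChain_iff]; exact ⟨hx, Or.inr ⟨hl, hc⟩⟩⟩
  · rw [if_neg hl] at h
    cases h
    exact ⟨C.label x, hl, by rw [inChain_iff]; exact ⟨hx, Or.inl ⟨rfl, rfl⟩⟩⟩
termination_by (x : ℕ)
decreasing_by exact C.parent_lt x hx

/-- two distinct labels exist besides any label -/
lemma exists_ne_label (a : Fin 3) : ∃ b : Fin 3, b ≠ a := by
  fin_cases a
  · exact ⟨1, by decide⟩
  · exact ⟨0, by decide⟩
  · exact ⟨0, by decide⟩

lemma linProx_pos {k j : Fin r} (h : C.LinProx k j) : 0 < (k : ℕ) := by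
  obtain ⟨a, b, hab, hc⟩ := h
  rw [inChain_iff] at hc
  exact hc.1

lemma linProx_iff {k j : Fin r} (hk : 0 < (k : ℕ)) :
    C.LinProx k j ↔ (C.parent k = j ∨ C.auxUp (C.label k) (C.parent k) = some j) := by
  constructor
  · rintro ⟨a, b, hab, hc⟩
    rw [inChain_iff] at hc
    obtain ⟨-, hc | hc⟩ := hc
    · exact Or.inl hc.1
    · right
      rw [hc.1]
      exact C.inChain_auxUp hab hc.2
  · rintro (h | h)
    · obtain ⟨b, hb⟩ := exists_ne_label (C.label k)
      exact ⟨C.label k, b, fun e => hb e.symm,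
        by rw [inChain_iff]; exact ⟨hk, Or.inl ⟨h, rfl⟩⟩⟩
    · obtain ⟨α, hα, hc⟩ := C.auxUp_inChain h
      exact ⟨α, C.label k, hα,
        by rw [inChain_iff]; exact ⟨hk, Or.inr ⟨rfl, hc⟩⟩⟩

end ToricConstellation
namespace ToricConstellation

variable {r : ℕ} (C : ToricConstellation r)

/-- integer dot product on `Fin 3 → ℤ` -/
def dotp (u w : Fin 3 → ℤ) : ℤ := ∑ c, u c * w c

lemma dotp_single_left (x : Fin 3) (w : Fin 3 → ℤ) : dotp (Pi.single x 1) w = w x := by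
  unfold dotp
  rw [Finset.sum_congr rfl (fun c _ => ?_), Finset.sum_ite_eq' Finset.univ x w]
  · simp
  · rw [Pi.single_apply]
    by_cases h : c = x <;> simp [h]

lemma dotp_sub_left (u u' w : Fin 3 → ℤ) : dotp (u - u') w = dotp u w - dotp u' w := by
  unfold dotp
  rw [← Finset.sum_sub_distrib]
  exact Finset.sum_congr rfl (fun c _ => by simp [sub_mul])

lemma dotp_add_right (u w w' : Fin 3 → ℤ) : dotp u (w + w') = dotp u w + dotp u w' := by
  unfold dotp
  rw [← Finset.sum_add_distrib]
  exact Finset.sum_congr rfl (fun c _ => by simp [mul_add])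

lemma dotp_sum_right (u : Fin 3 → ℤ) (s : Finset (Fin 3)) (f : Fin 3 → (Fin 3 → ℤ)) :
    dotp u (∑ y ∈ s, f y) = ∑ y ∈ s, dotp u (f y) := by
  classical
  induction s using Finset.induction with
  | empty => simp [dotp]
  | insert _ _ h ih => rw [Finset.sum_insert h, Finset.sum_insert h, dotp_add_right, ih]

lemma cone_eq (j : Fin r) :
    C.cone j = if 0 < (j : ℕ) then
      Function.update (C.cone (C.parent j)) (C.label j) (∑ a, C.cone (C.parent j) a)
    else fun a => Pi.single a 1 := by
  rw [cone]; split <;> simp_all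

lemma cone_lastRep (j : Fin r) (x : Fin 3) :
    C.cone j x = (C.lastRep j x).elim (Pi.single x 1) C.v := by
  rw [cone_eq, lastRep_eq]
  by_cases hj : 0 < (j : ℕ)
  · rw [if_pos hj, if_pos hj]
    by_cases hl : C.label j = x
    · rw [if_pos hl, hl, Function.update_self]
      rfl
    · rw [if_neg hl, Function.update_of_ne (fun e => hl e.symm)]
      exact cone_lastRep (C.parent j) x
  · rw [if_neg hj, if_neg hj]
    rfl
termination_by (j : ℕ)
decreasing_by exact C.parent_lt j hj

lemma cone_sum_pos (j : Fin r) (x : Fin 3) :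
    (∀ c, 0 ≤ C.cone j x c) ∧ 1 ≤ ∑ c, C.cone j x c := by
  rw [cone_eq]
  by_cases hj : 0 < (j : ℕ)
  · rw [if_pos hj]
    by_cases hl : C.label j = x
    · rw [hl, Function.update_self]
      constructor
      · intro c
        rw [Finset.sum_apply]
        exact Finset.sum_nonneg (fun a _ => (cone_sum_pos (C.parent j) a).1 c)
      · have : ∀ a : Fin 3, a ∈ Finset.univ → 1 ≤ ∑ c, C.cone (C.parent j) a c :=
          fun a _ => (cone_sum_pos (C.parent j) a).2
        calc (1 : ℤ) ≤ ∑ a : Fin 3, ∑ c, C.cone (C.parent j) a c := by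
              calc (1:ℤ) ≤ ∑ a : Fin 3, 1 := by simp
              _ ≤ _ := Finset.sum_le_sum this
          _ = ∑ c, (∑ a : Fin 3, C.cone (C.parent j) a) c := by
              rw [Finset.sum_comm]
              exact Finset.sum_congr rfl (fun c _ => by rw [Finset.sum_apply])
    · rw [Function.update_of_ne (fun e => hl e.symm)]
      exact cone_sum_pos (C.parent j) x
  · rw [if_neg hj]
    constructor
    · intro c
      rw [Pi.single_apply]
      by_cases h : c = x <;> simp [h]
    · simp
termination_by (j : ℕ)
decreasing_by all_goals exact C.parent_lt j hj

lemma v_sum_ge (j : Fin r) : 3 ≤ ∑ c, C.v j c := by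
  unfold v
  have : ∑ c, (∑ a, C.cone j a) c = ∑ a : Fin 3, ∑ c, C.cone j a c := by
    rw [Finset.sum_comm]
    exact Finset.sum_congr rfl (fun c _ => by rw [Finset.sum_apply])
  rw [this]
  calc (3:ℤ) = ∑ _a : Fin 3, 1 := by simp
    _ ≤ _ := Finset.sum_le_sum (fun a _ => (C.cone_sum_pos j a).2)

/-- dual basis of `cone` -/
def dual (j : Fin r) : Fin 3 → (Fin 3 → ℤ) :=
  if h : 0 < (j : ℕ) then
    fun x => if x = C.label j then dual (C.parent j) (C.label j)
             else dual (C.parent j) x - dual (C.parent j) (C.label j)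
  else fun x => Pi.single x 1
termination_by (j : ℕ)
decreasing_by all_goals exact C.parent_lt j h

lemma dual_eq (j : Fin r) :
    C.dual j = if 0 < (j : ℕ) then
      (fun x => if x = C.label j then C.dual (C.parent j) (C.label j)
             else C.dual (C.parent j) x - C.dual (C.parent j) (C.label j))
    else fun x => Pi.single x 1 := by
  rw [dual]; split <;> simp_all

lemma dual_spec (j : Fin r) (x y : Fin 3) :
    dotp (C.dual j x) (C.cone j y) = if x = y then 1 else 0 := by
  rw [dual_eq, cone_eq]
  by_cases hj : 0 < (j : ℕ)
  · rw [if_pos hj, if_pos hj]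
    set p := C.parent j
    set l := C.label j
    have hvp : ∀ x' : Fin 3, dotp (C.dual p x') (∑ a, C.cone p a) = 1 := by
      intro x'
      rw [dotp_sum_right, Finset.sum_congr rfl (fun a _ => dual_spec p x' a),
        Finset.sum_ite_eq Finset.univ x' (fun _ => (1:ℤ))]
      simp
    by_cases hx : x = l
    · rw [if_pos hx]
      by_cases hy : y = l
      · rw [hy, Function.update_self, hvp, if_pos hx]
      · rw [Function.update_of_ne hy, dual_spec p l y,
          if_neg (fun e : l = y => hy e.symm), if_neg (fun e : x = y => hy (e.symm.trans hx))]
    · rw [if_neg hx]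
      by_cases hy : y = l
      · rw [hy, Function.update_self, dotp_sub_left, hvp, hvp, sub_self, if_neg hx]
      · rw [Function.update_of_ne hy, dotp_sub_left, dual_spec p x y, dual_spec p l y,
          if_neg (fun e : l = y => hy e.symm), sub_zero]
  · rw [if_neg hj, if_neg hj, dotp_single_left, Pi.single_apply]
termination_by (j : ℕ)
decreasing_by all_goals exact C.parent_lt j hj

end ToricConstellation
namespace ToricConstellation

variable {r : ℕ} (C : ToricConstellation r)

lemma anc_eq (i j : Fin r) :
    C.anc i j = (decide (i = j) || if 0 < (j : ℕ) then C.anc i (C.parent j) else false) := by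
  rw [anc]; split <;> simp_all

lemma anc_iff {i j : Fin r} :
    C.anc i j = true ↔ i = j ∨ (0 < (j : ℕ) ∧ C.anc i (C.parent j) = true) := by
  rw [anc_eq]
  by_cases hj : 0 < (j : ℕ) <;> simp [hj]

lemma anc_refl (i : Fin r) : C.anc i i = true := by
  rw [anc_iff]; exact Or.inl rfl

lemma anc_le {i j : Fin r} (h : C.anc i j = true) : (i : ℕ) ≤ (j : ℕ) := by
  rw [anc_iff] at h
  obtain rfl | ⟨hj, h⟩ := h
  · exact le_refl _
  · exact le_trans (anc_le h) (le_of_lt (C.parent_lt j hj))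
termination_by (j : ℕ)
decreasing_by exact C.parent_lt j hj

lemma anc_root {q : Fin r} (hq : (q : ℕ) = 0) (p : Fin r) : C.anc q p = true := by
  rw [anc_iff]
  by_cases hp : 0 < (p : ℕ)
  · exact Or.inr ⟨hp, anc_root hq (C.parent p)⟩
  · exact Or.inl (Fin.ext (by omega))
termination_by (p : ℕ)
decreasing_by exact C.parent_lt p hp

lemma sum_v_eq (j : Fin r) (hj : 0 < (j : ℕ)) :
    ∑ c, C.v j c = ∑ c, C.v (C.parent j) c
      + ∑ a ∈ Finset.univ \ {C.label j}, ∑ c, C.cone (C.parent j) a c := by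
  have hcone : C.cone j = Function.update (C.cone (C.parent j)) (C.label j)
      (∑ a, C.cone (C.parent j) a) := by
    rw [cone_eq, if_pos hj]
  have swap : ∀ (s : Finset (Fin 3)) (f : Fin 3 → (Fin 3 → ℤ)),
      ∑ c, (∑ a ∈ s, f a) c = ∑ a ∈ s, ∑ c, f a c := by
    intro s f
    rw [Finset.sum_comm]
    exact Finset.sum_congr rfl (fun c _ => by rw [Finset.sum_apply])
  have h : (∑ a, C.cone j a) = (∑ a, C.cone (C.parent j) a)
      + ∑ a ∈ Finset.univ \ {C.label j}, C.cone (C.parent j) a := by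
    rw [hcone, Finset.sum_update_of_mem (Finset.mem_univ _)]
  unfold v
  rw [h]
  simp only [Pi.add_apply]
  rw [Finset.sum_add_distrib]
  congr 1
  exact swap _ _

lemma sv_step (j : Fin r) (hj : 0 < (j : ℕ)) :
    ∑ c, C.v (C.parent j) c < ∑ c, C.v j c := by
  rw [C.sum_v_eq j hj]
  have h2 : (2:ℤ) ≤ ∑ a ∈ Finset.univ \ {C.label j}, ∑ c, C.cone (C.parent j) a c := by
    have hcard : (Finset.univ \ {C.label j} : Finset (Fin 3)).card = 2 := by
      rw [Finset.card_sdiff_of_subset (Finset.singleton_subset_iff.2 (Finset.mem_univ _))]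
      simp
    calc (2:ℤ) = (Finset.univ \ {C.label j} : Finset (Fin 3)).card • (1:ℤ) := by
          rw [hcard]; simp
      _ ≤ _ := Finset.card_nsmul_le_sum _ _ _ (fun a _ => (C.cone_sum_pos (C.parent j) a).2)
  omega

lemma sv_mono {i j : Fin r} (h : C.anc i j = true) :
    ∑ c, C.v i c ≤ ∑ c, C.v j c := by
  rw [anc_iff] at h
  obtain rfl | ⟨hj, h⟩ := h
  · exact le_refl _
  · exact le_trans (sv_mono h) (le_of_lt (C.sv_step j hj))
termination_by (j : ℕ)
decreasing_by exact C.parent_lt j hj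

lemma sv_strict {i j : Fin r} (h : C.anc i j = true) (hne : i ≠ j) :
    ∑ c, C.v i c < ∑ c, C.v j c := by
  rw [anc_iff] at h
  obtain rfl | ⟨hj, h⟩ := h
  · exact absurd rfl hne
  · exact lt_of_le_of_lt (C.sv_mono h) (C.sv_step j hj)

/-- separation: inside the subtree rooted at the child `c` of `q`, the dual functional
of the branch label is dominated by the dual functional of any other label. -/
lemma sep {q c : Fin r} (hc0 : 0 < (c : ℕ)) (hpc : C.parent c = q) {b : Fin 3}
    (hb : b ≠ C.label c) {j : Fin r} (hj : C.anc c j = true) :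
    (∀ y, dotp (C.dual q (C.label c)) (C.cone j y) ≤ dotp (C.dual q b) (C.cone j y)) ∧
      dotp (C.dual q (C.label c)) (C.v j) < dotp (C.dual q b) (C.v j) := by
  by_cases hjc : c = j
  · subst hjc
    have hcone : C.cone c = Function.update (C.cone q) (C.label c)
        (∑ a, C.cone q a) := by
      rw [cone_eq, if_pos hc0, hpc]
    have hdv : ∀ x' : Fin 3, dotp (C.dual q x') (∑ a, C.cone q a) = 1 := by
      intro x'
      rw [dotp_sum_right, Finset.sum_congr rfl (fun a _ => C.dual_spec q x' a),
        Finset.sum_ite_eq Finset.univ x' (fun _ => (1:ℤ))]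
      simp
    have key1 : ∀ y, dotp (C.dual q (C.label c)) (C.cone c y)
        = (if y = C.label c then 1 else 0) := by
      intro y
      rw [hcone]
      by_cases hy : y = C.label c
      · rw [hy, Function.update_self, hdv, if_pos rfl]
      · rw [Function.update_of_ne hy, C.dual_spec q _ y, if_neg hy,
          if_neg (fun e : C.label c = y => hy e.symm)]
    have key2 : ∀ y, dotp (C.dual q b) (C.cone c y)
        = (if y = C.label c then 1 else if b = y then 1 else 0) := by
      intro y
      rw [hcone]
      by_cases hy : y = C.label c
      · rw [hy, Function.update_self, hdv, if_pos rfl]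
      · rw [Function.update_of_ne hy, C.dual_spec q b y, if_neg hy]
    constructor
    · intro y
      rw [key1 y, key2 y]
      by_cases hy : y = C.label c
      · simp [hy]
      · simp only [if_neg hy]
        by_cases hby : b = y <;> simp [hby]
    · unfold v
      rw [dotp_sum_right, dotp_sum_right,
        Finset.sum_congr rfl (fun y _ => key1 y),
        Finset.sum_congr rfl (fun y _ => key2 y)]
      have h1 : ∑ y : Fin 3, (if y = C.label c then (1:ℤ) else 0) = 1 := by
        rw [Finset.sum_ite_eq' Finset.univ (C.label c) (fun _ => (1:ℤ))]
        simp
      have h2 : ∑ y : Fin 3, (if y = C.label c then (1:ℤ) else if b = y then 1 else 0) = 2 := by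
        have : ∀ y : Fin 3, (if y = C.label c then (1:ℤ) else if b = y then 1 else 0)
            = (if y = C.label c then 1 else 0) + (if y = b then 1 else 0) := by
          intro y
          by_cases hy : y = C.label c
          · rw [if_pos hy, if_pos hy, if_neg (by rw [hy]; exact fun e => hb e.symm)]
            simp
          · rw [if_neg hy, if_neg hy]
            by_cases hby : b = y
            · rw [if_pos hby, if_pos hby.symm]
              simp
            · rw [if_neg hby, if_neg (fun e => hby e.symm)]
              simp
        rw [Finset.sum_congr rfl (fun y _ => this y), Finset.sum_add_distrib,
          Finset.sum_ite_eq' Finset.univ (C.label c) (fun _ => (1:ℤ)),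
          Finset.sum_ite_eq' Finset.univ b (fun _ => (1:ℤ))]
        simp
      rw [h1, h2]
      omega
  · have h' := C.anc_iff.1 hj
    obtain rfl | ⟨hj0, hanc⟩ := h'
    · exact absurd rfl hjc
    · have IH := sep hc0 hpc hb (j := C.parent j) hanc
      have hcone : C.cone j = Function.update (C.cone (C.parent j)) (C.label j)
          (∑ a, C.cone (C.parent j) a) := by
        rw [cone_eq, if_pos hj0]
      have hvdot : ∀ w, dotp w (C.v (C.parent j)) = dotp w (∑ a, C.cone (C.parent j) a) := by
        intro w; rfl
      have weak : ∀ y, dotp (C.dual q (C.label c)) (C.cone j y)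
          ≤ dotp (C.dual q b) (C.cone j y) := by
        intro y
        rw [hcone]
        by_cases hy : y = C.label j
        · rw [hy, Function.update_self, ← hvdot, ← hvdot]
          exact le_of_lt IH.2
        · rw [Function.update_of_ne hy]
          exact IH.1 y
      refine ⟨weak, ?_⟩
      have hsplit : ∀ w, dotp w (C.v j) = dotp w (C.v (C.parent j))
          + ∑ a ∈ Finset.univ \ {C.label j}, dotp w (C.cone (C.parent j) a) := by
        intro w
        show dotp w (∑ a, C.cone j a) = _
        rw [hcone, Finset.sum_update_of_mem (Finset.mem_univ _), dotp_add_right,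
          hvdot, dotp_sum_right, dotp_sum_right]
      rw [hsplit, hsplit]
      have hsum : ∑ a ∈ Finset.univ \ {C.label j}, dotp (C.dual q (C.label c)) (C.cone (C.parent j) a)
          ≤ ∑ a ∈ Finset.univ \ {C.label j}, dotp (C.dual q b) (C.cone (C.parent j) a) :=
        Finset.sum_le_sum (fun a _ => IH.1 a)
      have := IH.2
      omega
termination_by (j : ℕ)
decreasing_by exact C.parent_lt j hj0

end ToricConstellation
namespace ToricConstellation

variable {r : ℕ} (C : ToricConstellation r)

/-- the child of `w` on the way to `j` -/
def stepTo (w j : Fin r) : Fin r :=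
  if h : 0 < (j : ℕ) then (if C.parent j = w then j else stepTo w (C.parent j)) else j
termination_by (j : ℕ)
decreasing_by exact C.parent_lt j h

lemma stepTo_spec {w j : Fin r} (h : C.anc w j = true) (hne : w ≠ j) :
    C.parent (C.stepTo w j) = w ∧ 0 < ((C.stepTo w j) : ℕ) ∧ C.anc (C.stepTo w j) j = true := by
  rw [anc_iff] at h
  obtain rfl | ⟨hj, h⟩ := h
  · exact absurd rfl hne
  · rw [stepTo]
    rw [dif_pos hj]
    by_cases hp : C.parent j = w
    · rw [if_pos hp]
      exact ⟨hp, hj, C.anc_refl j⟩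
    · rw [if_neg hp]
      have IH := stepTo_spec (w := w) (j := C.parent j) h (fun e => hp e.symm)
      exact ⟨IH.1, IH.2.1, C.anc_iff.2 (Or.inr ⟨hj, IH.2.2⟩)⟩
termination_by (j : ℕ)
decreasing_by exact C.parent_lt j hj

/-- trichotomy: comparable or a common branching point -/
lemma trichotomy (p q : Fin r) :
    C.anc p q = true ∨ C.anc q p = true ∨
      ∃ w cp cq : Fin r, C.parent cp = w ∧ C.parent cq = w ∧ 0 < (cp : ℕ) ∧ 0 < (cq : ℕ) ∧
        cp ≠ cq ∧ C.anc cp p = true ∧ C.anc cq q = true := by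
  by_cases hpq : p = q
  · exact Or.inl (hpq ▸ C.anc_refl p)
  · rcases lt_trichotomy (p : ℕ) (q : ℕ) with hlt | heq | hgt
    · -- p < q, so q > 0
      have hq : 0 < (q : ℕ) := by omega
      rcases trichotomy p (C.parent q) with h | h | ⟨w, cp, cq, h1, h2, h3, h4, h5, h6, h7⟩
      · exact Or.inl (C.anc_iff.2 (Or.inr ⟨hq, h⟩))
      · by_cases hp : C.parent q = p
        · exact Or.inl (C.anc_iff.2 (Or.inr ⟨hq, hp ▸ C.anc_refl p⟩))
        · have spec := C.stepTo_spec h hp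
          by_cases hcq : C.stepTo (C.parent q) p = q
          · exact Or.inr (Or.inl (hcq ▸ spec.2.2))
          · exact Or.inr (Or.inr ⟨C.parent q, C.stepTo (C.parent q) p, q, spec.1, rfl,
              spec.2.1, hq, hcq, spec.2.2, C.anc_refl q⟩)
      · exact Or.inr (Or.inr ⟨w, cp, cq, h1, h2, h3, h4, h5, h6,
          C.anc_iff.2 (Or.inr ⟨hq, h7⟩)⟩)
    · exact absurd (Fin.ext heq) hpq
    · -- q < p, so p > 0
      have hp : 0 < (p : ℕ) := by omega
      rcases trichotomy (C.parent p) q with h | h | ⟨w, cp, cq, h1, h2, h3, h4, h5, h6, h7⟩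
      · by_cases hq : C.parent p = q
        · exact Or.inr (Or.inl (C.anc_iff.2 (Or.inr ⟨hp, hq ▸ C.anc_refl q⟩)))
        · have spec := C.stepTo_spec h hq
          by_cases hcp : C.stepTo (C.parent p) q = p
          · exact Or.inl (hcp ▸ spec.2.2)
          · exact Or.inr (Or.inr ⟨C.parent p, p, C.stepTo (C.parent p) q, rfl, spec.1,
              hp, spec.2.1, fun e => hcp e.symm, C.anc_refl p, spec.2.2⟩)
      · exact Or.inr (Or.inl (C.anc_iff.2 (Or.inr ⟨hp, h⟩)))
      · exact Or.inr (Or.inr ⟨w, cp, cq, h1, h2, h3, h4, h5,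
          C.anc_iff.2 (Or.inr ⟨hp, h6⟩), h7⟩)
termination_by (p : ℕ) + (q : ℕ)
decreasing_by
  all_goals first
    | (have := C.parent_lt q hq; omega)
    | (have := C.parent_lt p hp; omega)

lemma v_inj {p q : Fin r} (h : C.v p = C.v q) : p = q := by
  by_contra hne
  rcases C.trichotomy p q with hc | hc | ⟨w, cp, cq, h1, h2, h3, h4, h5, h6, h7⟩
  · have := C.sv_strict hc hne
    rw [h] at this
    exact absurd this (lt_irrefl _)
  · have := C.sv_strict hc (fun e => hne e.symm)
    rw [h] at this
    exact absurd this (lt_irrefl _)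
  · have hlab : C.label cq ≠ C.label cp :=
      fun e => C.label_distinct cq cp h4 h3 (fun e' => h5 e'.symm) (h2.trans h1.symm) e
    have S1 := (C.sep h3 h1 hlab h6).2
    have hlab' : C.label cp ≠ C.label cq := fun e => hlab e.symm
    have S2 := (C.sep h4 h2 hlab' h7).2
    rw [h] at S1
    omega

lemma prox_iff {j i : Fin r} : C.Prox j i ↔ ∃ a, C.lastRep j a = some i := by
  constructor
  · rintro ⟨hne, a, hc⟩
    refine ⟨a, ?_⟩
    rw [cone_lastRep] at hc
    cases hOpt : C.lastRep j a with
    | none =>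
      rw [hOpt] at hc
      have h1 : ∑ c, Pi.single a (1:ℤ) c = 1 := by
        rw [Finset.sum_congr rfl (fun c _ => Pi.single_apply a (1:ℤ) c),
          Finset.sum_ite_eq' Finset.univ a (fun _ => (1:ℤ))]
        simp
      have h3 := C.v_sum_ge i
      rw [show (none : Option (Fin r)).elim (Pi.single a (1:ℤ)) C.v = Pi.single a 1 from rfl] at hc
      rw [hc] at h1
      omega
    | some p =>
      rw [hOpt] at hc
      rw [show (some p).elim (Pi.single a (1:ℤ)) C.v = C.v p from rfl] at hc
      rw [C.v_inj hc]
  · rintro ⟨a, ha⟩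
    refine ⟨fun e => absurd (C.lastRep_lt (e ▸ ha)) (lt_irrefl _), a, ?_⟩
    rw [cone_lastRep, ha]
    rfl

lemma prox_lt {j i : Fin r} (h : C.Prox j i) : (i : ℕ) < (j : ℕ) := by
  obtain ⟨a, ha⟩ := C.prox_iff.1 h
  exact C.lastRep_lt ha

lemma not_prox_self (i : Fin r) : ¬ C.Prox i i := fun h => absurd (C.prox_lt h) (lt_irrefl _)

end ToricConstellation
namespace ToricConstellation

variable {r : ℕ} (C : ToricConstellation r)

lemma lastRep_label_of_parent {k i : Fin r} {a : Fin 3}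
    (h : C.lastRep k a = some i) (hpk : C.parent k = i) : C.label k = a := by
  have hk := C.lastRep_pos h
  rw [lastRep_eq, if_pos hk] at h
  by_cases hl : C.label k = a
  · exact hl
  · rw [if_neg hl, hpk] at h
    exact absurd (C.lastRep_lt h) (lt_irrefl _)

lemma nonchild_facts {k i : Fin r} {a : Fin 3}
    (h : C.lastRep k a = some i) (hpk : C.parent k ≠ i) :
    C.label k ≠ a ∧ C.lastRep (C.parent k) a = some i := by
  have hk := C.lastRep_pos h
  rw [lastRep_eq, if_pos hk] at h
  by_cases hl : C.label k = a
  · rw [if_pos hl] at h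
    exact absurd (Option.some.inj h) hpk
  · rw [if_neg hl] at h
    exact ⟨hl, h⟩

lemma inChain_child_iff {k i : Fin r} {a : Fin 3}
    (h : C.lastRep k a = some i) (hpk : C.parent k = i) {α β : Fin 3} (hαβ : α ≠ β) :
    (C.inChain i α β k = true) ↔ α = a := by
  have hk := C.lastRep_pos h
  have hlab := C.lastRep_label_of_parent h hpk
  constructor
  · intro hc
    rw [inChain_iff] at hc
    obtain ⟨-, hc | hc⟩ := hc
    · rw [← hc.2, hlab]
    · rw [hpk] at hc
      exact absurd (C.inChain_lt hαβ hc.2) (lt_irrefl _)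
  · rintro rfl
    rw [inChain_iff]
    exact ⟨hk, Or.inl ⟨hpk, hlab⟩⟩

lemma inChain_nonchild {k i : Fin r} {α β : Fin 3} (hαβ : α ≠ β)
    (hpk : C.parent k ≠ i) (hc : C.inChain i α β k = true) :
    C.label k = β ∧ C.inChain i α β (C.parent k) = true := by
  rw [inChain_iff] at hc
  obtain ⟨-, hc | hc⟩ := hc
  · exact absurd hc.1 hpk
  · exact hc

lemma inChain_chain_iff {k i : Fin r} {a : Fin 3}
    (h : C.lastRep k a = some i) (hpk : C.parent k ≠ i)
    (hch : C.inChain i a (C.label k) (C.parent k) = true) {α β : Fin 3} (hαβ : α ≠ β) :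
    (C.inChain i α β k = true) ↔ (α = a ∧ β = C.label k) := by
  have hk := C.lastRep_pos h
  constructor
  · intro hc
    obtain ⟨hl, hc'⟩ := C.inChain_nonchild hαβ hpk hc
    refine ⟨?_, hl.symm⟩
    exact C.lastRep_uniq (C.inChain_lastRep hαβ hc) h
  · rintro ⟨rfl, rfl⟩
    rw [inChain_iff]
    exact ⟨hk, Or.inr ⟨rfl, hch⟩⟩

lemma inChain_mixed_false {k i : Fin r} {a : Fin 3}
    (h : C.lastRep k a = some i) (hpk : C.parent k ≠ i)
    (hnch : ¬ C.inChain i a (C.label k) (C.parent k) = true) {α β : Fin 3} (hαβ : α ≠ β) :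
    ¬ C.inChain i α β k = true := by
  intro hc
  obtain ⟨hl, hc'⟩ := C.inChain_nonchild hαβ hpk hc
  have hα : α = a := C.lastRep_uniq (C.inChain_lastRep hαβ hc) h
  rw [hα] at hc'
  rw [hl] at hnch
  exact hnch hc'

lemma mixed_aux {i : Fin r} {a b : Fin 3} (hab : a ≠ b) :
    ∀ {k : Fin r}, C.lastRep k a = some i → C.label k = b →
      ¬ C.inChain i a b k = true →
      ∃ j0, C.auxUp b (C.parent k) = some j0 ∧ C.lastRep j0 a = some i ∧ j0 ≠ i := by
  intro k h hlab hnch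
  have hk := C.lastRep_pos h
  have hp : C.lastRep (C.parent k) a = some i := by
    rw [lastRep_eq, if_pos hk, if_neg (by rw [hlab]; exact fun e => hab e.symm)] at h
    exact h
  have hp0 := C.lastRep_pos hp
  have hnchp : ¬ C.inChain i a b (C.parent k) = true := by
    intro hc
    exact hnch (C.inChain_iff.2 ⟨hk, Or.inr ⟨hlab, hc⟩⟩)
  by_cases hlp : C.label (C.parent k) = b
  · obtain ⟨j0, h1, h2, h3⟩ := mixed_aux hab hp hlp hnchp
    refine ⟨j0, ?_, h2, h3⟩
    rw [auxUp_eq, if_pos hp0, if_pos hlp]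
    exact h1
  · have hlpa : C.label (C.parent k) ≠ a := by
      intro e
      have : C.lastRep (C.parent k) a = some (C.parent (C.parent k)) := by
        rw [lastRep_eq, if_pos hp0, if_pos e]
      rw [this] at hp
      have hpp := Option.some.inj hp
      exact hnchp (C.inChain_iff.2 ⟨hp0, Or.inl ⟨hpp, e⟩⟩)
    refine ⟨C.parent (C.parent k), ?_, ?_, ?_⟩
    · rw [auxUp_eq, if_pos hp0, if_neg hlp]
    · rw [lastRep_eq, if_pos hp0, if_neg hlpa] at hp
      exact hp
    · intro e
      rw [lastRep_eq, if_pos hp0, if_neg hlpa] at hp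
      rw [e] at hp
      exact absurd (C.lastRep_lt hp) (lt_irrefl _)
termination_by k => (k : ℕ)
decreasing_by exact C.parent_lt k hk

end ToricConstellation
namespace ToricCluster

open ToricConstellation

variable {r : ℕ} (A : ToricCluster r)

lemma mem_proxSet {j i : Fin r} : j ∈ A.proxSet i ↔ A.toToricConstellation.Prox j i := by
  simp [proxSet]

lemma mem_Bset {j i : Fin r} : j ∈ A.Bset i ↔ A.toToricConstellation.Prox i j := by
  simp [Bset]

lemma cover3 : ∀ a b c γ : Fin 3, b ≠ a → c ≠ a → b ≠ c → (γ = a ∨ γ = b ∨ γ = c) := by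
  decide

lemma optCard {X : Type*} [DecidableEq X] (o : Option X) :
    o.toFinset.card = if o.isSome then 1 else 0 := by
  cases o <;> simp

lemma c1_child {i k : Fin r} {a : Fin 3}
    (h : A.toToricConstellation.lastRep k a = some i)
    (hpk : A.toToricConstellation.parent k = i) :
    (A.proxSet i).filter (fun j => A.toToricConstellation.LinProx k j) = ∅ := by
  set C := A.toToricConstellation
  have hk := C.lastRep_pos h
  ext j
  simp only [Finset.mem_filter, Finset.notMem_empty, iff_false, not_and, mem_proxSet]
  intro hPj hLP
  rcases (C.linProx_iff hk).1 hLP with hj | hj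
  · rw [hpk] at hj
    exact C.not_prox_self i (hj ▸ hPj)
  · have h1 := C.auxUp_lt hj
    rw [hpk] at h1
    have h2 := C.prox_lt hPj
    omega

lemma c1_chain {i k : Fin r} {a : Fin 3}
    (h : A.toToricConstellation.lastRep k a = some i)
    (hpk : A.toToricConstellation.parent k ≠ i)
    (hab : a ≠ A.toToricConstellation.label k)
    (hch : A.toToricConstellation.inChain i a (A.toToricConstellation.label k)
      (A.toToricConstellation.parent k) = true) :
    (A.proxSet i).filter (fun j => A.toToricConstellation.LinProx k j)
      = {A.toToricConstellation.parent k} := by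
  set C := A.toToricConstellation
  have hk := C.lastRep_pos h
  ext j
  simp only [Finset.mem_filter, Finset.mem_singleton, mem_proxSet]
  constructor
  · rintro ⟨hPj, hLP⟩
    rcases (C.linProx_iff hk).1 hLP with hj | hj
    · exact hj.symm
    · rw [C.inChain_auxUp hab hch] at hj
      exact absurd (Option.some.inj hj ▸ hPj) (C.not_prox_self i)
  · rintro rfl
    refine ⟨C.prox_iff.2 ⟨a, (C.nonchild_facts h hpk).2⟩, (C.linProx_iff hk).2 (Or.inl rfl)⟩

lemma c1_mixed {i k j0 : Fin r} {a : Fin 3}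
    (h : A.toToricConstellation.lastRep k a = some i)
    (hpk : A.toToricConstellation.parent k ≠ i)
    (hj0 : A.toToricConstellation.auxUp (A.toToricConstellation.label k)
      (A.toToricConstellation.parent k) = some j0)
    (hj0l : A.toToricConstellation.lastRep j0 a = some i) (hj0i : j0 ≠ i) :
    (A.proxSet i).filter (fun j => A.toToricConstellation.LinProx k j)
      = {A.toToricConstellation.parent k, j0} := by
  set C := A.toToricConstellation
  have hk := C.lastRep_pos h
  ext j
  simp only [Finset.mem_filter, Finset.mem_insert, Finset.mem_singleton, mem_proxSet]
  constructor
  · rintro ⟨hPj, hLP⟩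
    rcases (C.linProx_iff hk).1 hLP with hj | hj
    · exact Or.inl hj.symm
    · rw [hj0] at hj
      exact Or.inr (Option.some.inj hj).symm
  · rintro (rfl | rfl)
    · exact ⟨C.prox_iff.2 ⟨a, (C.nonchild_facts h hpk).2⟩, (C.linProx_iff hk).2 (Or.inl rfl)⟩
    · exact ⟨C.prox_iff.2 ⟨a, hj0l⟩, (C.linProx_iff hk).2 (Or.inr hj0)⟩

lemma lastRep_child_stable {i k : Fin r} {a : Fin 3}
    (h : A.toToricConstellation.lastRep k a = some i)
    (hpk : A.toToricConstellation.parent k = i) {γ : Fin 3} (hγ : γ ≠ a) :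
    A.toToricConstellation.lastRep k γ = A.toToricConstellation.lastRep i γ := by
  set C := A.toToricConstellation
  have hk := C.lastRep_pos h
  have hlab := C.lastRep_label_of_parent h hpk
  rw [C.lastRep_eq, if_pos hk, if_neg (by rw [hlab]; exact fun e => hγ e.symm), hpk]

lemma c2_child {i k : Fin r} {a b c : Fin 3}
    (h : A.toToricConstellation.lastRep k a = some i)
    (hpk : A.toToricConstellation.parent k = i)
    (hb : b ≠ a) (hc : c ≠ a) (hbc : b ≠ c) :
    (A.Bset i).filter (fun j => A.toToricConstellation.Prox k j)
      = (A.toToricConstellation.lastRep i b).toFinset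
        ∪ (A.toToricConstellation.lastRep i c).toFinset := by
  set C := A.toToricConstellation
  ext j
  simp only [Finset.mem_filter, Finset.mem_union, Option.mem_toFinset, Option.mem_def, mem_Bset]
  constructor
  · rintro ⟨hBj, hPk⟩
    obtain ⟨γ, hγ⟩ := C.prox_iff.1 hPk
    rcases cover3 a b c γ hb hc hbc with rfl | rfl | rfl
    · rw [h] at hγ
      exact absurd (Option.some.inj hγ ▸ hBj) (C.not_prox_self i)
    · rw [A.lastRep_child_stable h hpk hb] at hγ
      exact Or.inl hγ
    · rw [A.lastRep_child_stable h hpk hc] at hγ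
      exact Or.inr hγ
  · rintro (hj | hj)
    · exact ⟨C.prox_iff.2 ⟨b, hj⟩,
        C.prox_iff.2 ⟨b, by rw [A.lastRep_child_stable h hpk hb]; exact hj⟩⟩
    · exact ⟨C.prox_iff.2 ⟨c, hj⟩,
        C.prox_iff.2 ⟨c, by rw [A.lastRep_child_stable h hpk hc]; exact hj⟩⟩

lemma c2_chain {i k : Fin r} {a c : Fin 3}
    (h : A.toToricConstellation.lastRep k a = some i)
    (hpk : A.toToricConstellation.parent k ≠ i)
    (hab : a ≠ A.toToricConstellation.label k)
    (hch : A.toToricConstellation.inChain i a (A.toToricConstellation.label k)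
      (A.toToricConstellation.parent k) = true)
    (hca : c ≠ a) (hcb : c ≠ A.toToricConstellation.label k) :
    (A.Bset i).filter (fun j => A.toToricConstellation.Prox k j)
      = (A.toToricConstellation.lastRep i c).toFinset := by
  set C := A.toToricConstellation
  have hk := C.lastRep_pos h
  have hchk : C.inChain i a (C.label k) k = true :=
    C.inChain_iff.2 ⟨hk, Or.inr ⟨rfl, hch⟩⟩
  have hstable : C.lastRep k c = C.lastRep i c := C.lastRep_stable hchk hca hcb
  ext j
  simp only [Finset.mem_filter, Option.mem_toFinset, Option.mem_def, mem_Bset]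
  constructor
  · rintro ⟨hBj, hPk⟩
    obtain ⟨γ, hγ⟩ := C.prox_iff.1 hPk
    rcases cover3 a (C.label k) c γ (fun e => hab e.symm) hca
      (fun e => hcb e.symm) with rfl | rfl | rfl
    · rw [h] at hγ
      exact absurd (Option.some.inj hγ ▸ hBj) (C.not_prox_self i)
    · have : C.lastRep k (C.label k) = some (C.parent k) := by
        rw [C.lastRep_eq, if_pos hk, if_pos rfl]
      rw [this] at hγ
      have h1 := C.prox_lt hBj
      have h2 := C.lastRep_lt (C.nonchild_facts h hpk).2
      rw [← Option.some.inj hγ] at h1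
      omega
    · rw [hstable] at hγ
      exact hγ
  · intro hj
    exact ⟨C.prox_iff.2 ⟨c, hj⟩, C.prox_iff.2 ⟨c, by rw [hstable]; exact hj⟩⟩

end ToricCluster
namespace ToricCluster

open ToricConstellation

variable {r : ℕ} (A : ToricCluster r)

set_option maxHeartbeats 1000000 in
lemma perNode (i k : Fin r) :
    (if A.toToricConstellation.Prox k i
      then (((A.proxSet i).filter (fun j => A.toToricConstellation.LinProx k j)).card : ℤ) * A.m k
      else 0)
    + (if A.toToricConstellation.LinProx k i
      then (((A.Bset i).filter (fun j => A.toToricConstellation.Prox k j)).card : ℤ) * A.m k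
      else 0)
    + (if (2 : Fin 3) ∉ A.toToricConstellation.labelsUnder i then
        ((if A.toToricConstellation.inChain i 0 1 k = true then A.m k else 0)
          + (if A.toToricConstellation.inChain i 1 0 k = true then A.m k else 0)) else 0)
    + (if (1 : Fin 3) ∉ A.toToricConstellation.labelsUnder i then
        ((if A.toToricConstellation.inChain i 0 2 k = true then A.m k else 0)
          + (if A.toToricConstellation.inChain i 2 0 k = true then A.m k else 0)) else 0)
    + (if (0 : Fin 3) ∉ A.toToricConstellation.labelsUnder i then
        ((if A.toToricConstellation.inChain i 1 2 k = true then A.m k else 0)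
          + (if A.toToricConstellation.inChain i 2 1 k = true then A.m k else 0)) else 0)
    = 2 * (if A.toToricConstellation.Prox k i then A.m k else 0) := by
  set C := A.toToricConstellation with hC
  by_cases hP : ∃ γ, C.lastRep k γ = some i
  · obtain ⟨a, ha⟩ := hP
    have hk := C.lastRep_pos ha
    have hPr : C.Prox k i := C.prox_iff.2 ⟨a, ha⟩
    by_cases hpk : C.parent k = i
    · -- child case
      have hlab := C.lastRep_label_of_parent ha hpk
      have hL : C.LinProx k i := (C.linProx_iff hk).2 (Or.inl hpk)
      have hc1 := A.c1_child ha hpk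
      have e01 := C.inChain_child_iff ha hpk (show (0:Fin 3) ≠ 1 by decide)
      have e10 := C.inChain_child_iff ha hpk (show (1:Fin 3) ≠ 0 by decide)
      have e02 := C.inChain_child_iff ha hpk (show (0:Fin 3) ≠ 2 by decide)
      have e20 := C.inChain_child_iff ha hpk (show (2:Fin 3) ≠ 0 by decide)
      have e12 := C.inChain_child_iff ha hpk (show (1:Fin 3) ≠ 2 by decide)
      have e21 := C.inChain_child_iff ha hpk (show (2:Fin 3) ≠ 1 by decide)
      rw [if_pos hPr, if_pos hPr, if_pos hL, hc1]
      simp only [Finset.card_empty, Nat.cast_zero, zero_mul, zero_add]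
      have hdis : ∀ b c : Fin 3, b ≠ c →
          Disjoint (C.lastRep i b).toFinset (C.lastRep i c).toFinset := by
        intro b c hbc
        rw [Finset.disjoint_left]
        intro x hx1 hx2
        rw [Option.mem_toFinset, Option.mem_def] at hx1 hx2
        exact hbc (C.lastRep_uniq hx1 hx2)
      fin_cases a
      · rw [A.c2_child ha hpk (show (1:Fin 3) ≠ 0 by decide) (show (2:Fin 3) ≠ 0 by decide)
            (by decide), Finset.card_union_of_disjoint (hdis 1 2 (by decide)),
          optCard, optCard]
        simp only [e01, e10, e02, e20, e12, e21, C.mem_labelsUnder_iff]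
        by_cases h1 : (C.lastRep i 1).isSome <;> by_cases h2 : (C.lastRep i 2).isSome <;>
          simp [h1, h2] <;> ring
      · rw [A.c2_child ha hpk (show (0:Fin 3) ≠ 1 by decide) (show (2:Fin 3) ≠ 1 by decide)
            (by decide), Finset.card_union_of_disjoint (hdis 0 2 (by decide)),
          optCard, optCard]
        simp only [e01, e10, e02, e20, e12, e21, C.mem_labelsUnder_iff]
        by_cases h0 : (C.lastRep i 0).isSome <;> by_cases h2 : (C.lastRep i 2).isSome <;>
          simp [h0, h2] <;> ring
      · rw [A.c2_child ha hpk (show (0:Fin 3) ≠ 2 by decide) (show (1:Fin 3) ≠ 2 by decide)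
            (by decide), Finset.card_union_of_disjoint (hdis 0 1 (by decide)),
          optCard, optCard]
        simp only [e01, e10, e02, e20, e12, e21, C.mem_labelsUnder_iff]
        by_cases h0 : (C.lastRep i 0).isSome <;> by_cases h1 : (C.lastRep i 1).isSome <;>
          simp [h0, h1] <;> ring
    · -- not a child
      have hnc := C.nonchild_facts ha hpk
      have hab : a ≠ C.label k := fun e => hnc.1 e.symm
      by_cases hch : C.inChain i a (C.label k) (C.parent k) = true
      · -- chain case
        have hchk : C.inChain i a (C.label k) k = true :=
          C.inChain_iff.2 ⟨hk, Or.inr ⟨rfl, hch⟩⟩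
        have hL : C.LinProx k i := ⟨a, C.label k, hab, hchk⟩
        have hc1 := A.c1_chain ha hpk hab hch
        have e01 := C.inChain_chain_iff ha hpk hch (show (0:Fin 3) ≠ 1 by decide)
        have e10 := C.inChain_chain_iff ha hpk hch (show (1:Fin 3) ≠ 0 by decide)
        have e02 := C.inChain_chain_iff ha hpk hch (show (0:Fin 3) ≠ 2 by decide)
        have e20 := C.inChain_chain_iff ha hpk hch (show (2:Fin 3) ≠ 0 by decide)
        have e12 := C.inChain_chain_iff ha hpk hch (show (1:Fin 3) ≠ 2 by decide)
        have e21 := C.inChain_chain_iff ha hpk hch (show (2:Fin 3) ≠ 1 by decide)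
        rw [if_pos hPr, if_pos hPr, if_pos hL, hc1, Finset.card_singleton]
        have hc2 : ∀ c : Fin 3, c ≠ a → c ≠ A.toToricConstellation.label k →
            (A.Bset i).filter (fun j => A.toToricConstellation.Prox k j)
              = (C.lastRep i c).toFinset :=
          fun c h1 h2 => A.c2_chain ha hpk hab hch h1 h2
        obtain ⟨b, hbdef⟩ : ∃ b, C.label k = b := ⟨_, rfl⟩
        rw [hbdef] at hab e01 e10 e02 e20 e12 e21 hc2
        clear hch hchk hnc ha hc1 hL hPr hbdef
        fin_cases a <;> fin_cases b
        · exact absurd rfl hab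
        · rw [hc2 2 (by decide) (by decide), optCard]
          simp only [e01, e10, e02, e20, e12, e21, C.mem_labelsUnder_iff]
          by_cases hz : (C.lastRep i (2:Fin 3)).isSome <;> simp [hz] <;> ring
        · rw [hc2 1 (by decide) (by decide), optCard]
          simp only [e01, e10, e02, e20, e12, e21, C.mem_labelsUnder_iff]
          by_cases hz : (C.lastRep i (1:Fin 3)).isSome <;> simp [hz] <;> ring
        · rw [hc2 2 (by decide) (by decide), optCard]
          simp only [e01, e10, e02, e20, e12, e21, C.mem_labelsUnder_iff]
          by_cases hz : (C.lastRep i (2:Fin 3)).isSome <;> simp [hz] <;> ring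
        · exact absurd rfl hab
        · rw [hc2 0 (by decide) (by decide), optCard]
          simp only [e01, e10, e02, e20, e12, e21, C.mem_labelsUnder_iff]
          by_cases hz : (C.lastRep i (0:Fin 3)).isSome <;> simp [hz] <;> ring
        · rw [hc2 1 (by decide) (by decide), optCard]
          simp only [e01, e10, e02, e20, e12, e21, C.mem_labelsUnder_iff]
          by_cases hz : (C.lastRep i (1:Fin 3)).isSome <;> simp [hz] <;> ring
        · rw [hc2 0 (by decide) (by decide), optCard]
          simp only [e01, e10, e02, e20, e12, e21, C.mem_labelsUnder_iff]
          by_cases hz : (C.lastRep i (0:Fin 3)).isSome <;> simp [hz] <;> ring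
        · exact absurd rfl hab
      · -- mixed case
        have hnchk : ¬ C.inChain i a (C.label k) k = true := by
          intro hcc
          exact hch (C.inChain_nonchild hab hpk hcc).2
        obtain ⟨j0, hj0, hj0l, hj0i⟩ := C.mixed_aux hab ha rfl hnchk
        have hL : ¬ C.LinProx k i := by
          rintro ⟨α, β, ne, hc⟩
          exact C.inChain_mixed_false ha hpk hch ne hc
        have hc1 := A.c1_mixed ha hpk hj0 hj0l hj0i
        have hcard : ({C.parent k, j0} : Finset (Fin r)).card = 2 := by
          rw [Finset.card_insert_of_notMem (by
            simp only [Finset.mem_singleton]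
            intro e
            have := C.auxUp_lt hj0
            omega), Finset.card_singleton]
        have hzero : ∀ α β : Fin 3, α ≠ β → (if C.inChain i α β k = true then A.m k else 0) = 0 :=
          fun α β ne => if_neg (C.inChain_mixed_false ha hpk hch ne)
        rw [if_pos hPr, if_pos hPr, if_neg hL, hc1, hcard,
          hzero 0 1 (by decide), hzero 1 0 (by decide), hzero 0 2 (by decide),
          hzero 2 0 (by decide), hzero 1 2 (by decide), hzero 2 1 (by decide)]
        simp
  · -- k is not proximate to i
    have hPr : ¬ C.Prox k i := fun hp => hP (C.prox_iff.1 hp)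
    have hL : ¬ C.LinProx k i := by
      rintro ⟨α, β, ne, hc⟩
      exact hP ⟨α, C.inChain_lastRep ne hc⟩
    have hzero : ∀ α β : Fin 3, α ≠ β → (if C.inChain i α β k = true then A.m k else 0) = 0 :=
      fun α β ne => if_neg (fun hc => hP ⟨α, C.inChain_lastRep ne hc⟩)
    rw [if_neg hPr, if_neg hPr, if_neg hL,
      hzero 0 1 (by decide), hzero 1 0 (by decide), hzero 0 2 (by decide),
      hzero 2 0 (by decide), hzero 1 2 (by decide), hzero 2 1 (by decide)]
    simp

end ToricCluster

namespace ToricCluster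

open ToricConstellation

variable {r : ℕ} (A : ToricCluster r)

lemma Bset_eq_biUnion (i : Fin r) :
    A.Bset i = Finset.univ.biUnion
      (fun γ : Fin 3 => (A.toToricConstellation.lastRep i γ).toFinset) := by
  ext j
  simp only [Finset.mem_biUnion, Finset.mem_univ, true_and, Option.mem_toFinset,
    Option.mem_def, mem_Bset]
  exact A.toToricConstellation.prox_iff

lemma Bcard_eq (i : Fin r) :
    (A.Bset i).card = (A.toToricConstellation.labelsUnder i).card := by
  set C := A.toToricConstellation
  rw [A.Bset_eq_biUnion i, Finset.card_biUnion (fun x _ y _ hxy => by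
    rw [Function.onFun, Finset.disjoint_left]
    intro z hz1 hz2
    rw [Option.mem_toFinset, Option.mem_def] at hz1 hz2
    exact hxy (C.lastRep_uniq hz1 hz2))]
  have h1 : ∀ γ : Fin 3, (C.lastRep i γ).toFinset.card
      = if γ ∈ C.labelsUnder i then 1 else 0 := by
    intro γ
    rw [optCard]
    exact if_congr (C.mem_labelsUnder_iff).symm rfl rfl
  rw [Finset.sum_congr rfl (fun γ _ => h1 γ), ← Finset.card_filter]
  congr 1
  ext γ
  simp

end ToricCluster


open ToricConstellation ToricCluster


theorem stmt2 {r : ℕ} (A : ToricCluster r) (hA : A.Idealistic) (i : Fin r) :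
    A.R i = 3 * A.m i - 2 * ∑ j ∈ A.proxSet i, A.m j
      + (∑ j ∈ A.proxSet i, ∑ k ∈ (A.proxSet i).filter
          (fun k => LinProx A.toToricConstellation k j), A.m k)
      + (∑ j ∈ A.Bset i, ∑ k ∈ (A.proxSet j).filter
          (fun k => LinProx A.toToricConstellation k i), A.m k)
      - ∑ _j ∈ A.Bset i, A.m i := by
  classical
  -- abbreviations (all spelled out to keep terms syntactically stable)
  have hcardS : ((A.toToricConstellation.labelsUnder i).card : ℤ)
      = (if (0:Fin 3) ∈ A.toToricConstellation.labelsUnder i then 1 else 0)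
        + (if (1:Fin 3) ∈ A.toToricConstellation.labelsUnder i then 1 else 0)
        + (if (2:Fin 3) ∈ A.toToricConstellation.labelsUnder i then 1 else 0) := by
    have h : A.toToricConstellation.labelsUnder i
        = Finset.univ.filter (fun γ => γ ∈ A.toToricConstellation.labelsUnder i) := by
      ext γ; simp
    conv_lhs => rw [h, Finset.card_filter, Fin.sum_univ_three]
    push_cast
    rfl
  -- split R into the m_i part and the M part
  have hR : A.R i = ((if (2:Fin 3) ∉ A.toToricConstellation.labelsUnder i then A.m i else 0)
        + (if (1:Fin 3) ∉ A.toToricConstellation.labelsUnder i then A.m i else 0)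
        + (if (0:Fin 3) ∉ A.toToricConstellation.labelsUnder i then A.m i else 0))
      - ((if (2:Fin 3) ∉ A.toToricConstellation.labelsUnder i then A.M i 0 1 + A.M i 1 0 else 0)
        + (if (1:Fin 3) ∉ A.toToricConstellation.labelsUnder i then A.M i 0 2 + A.M i 2 0 else 0)
        + (if (0:Fin 3) ∉ A.toToricConstellation.labelsUnder i then A.M i 1 2 + A.M i 2 1 else 0)) := by
    rw [R, rab, rab, rab]
    by_cases h2 : (2:Fin 3) ∉ A.toToricConstellation.labelsUnder i <;>
      by_cases h1 : (1:Fin 3) ∉ A.toToricConstellation.labelsUnder i <;>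
      by_cases h0 : (0:Fin 3) ∉ A.toToricConstellation.labelsUnder i <;>
      simp [h0, h1, h2] <;> ring
  -- the m_i part
  have hmi : (if (2:Fin 3) ∉ A.toToricConstellation.labelsUnder i then A.m i else 0)
        + (if (1:Fin 3) ∉ A.toToricConstellation.labelsUnder i then A.m i else 0)
        + (if (0:Fin 3) ∉ A.toToricConstellation.labelsUnder i then A.m i else 0)
      = (3 - ((A.toToricConstellation.labelsUnder i).card : ℤ)) * A.m i := by
    rw [hcardS]
    by_cases h2 : (2:Fin 3) ∈ A.toToricConstellation.labelsUnder i <;>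
      by_cases h1 : (1:Fin 3) ∈ A.toToricConstellation.labelsUnder i <;>
      by_cases h0 : (0:Fin 3) ∈ A.toToricConstellation.labelsUnder i <;>
      simp [h0, h1, h2] <;> ring
  -- sum rewrites
  have hP2 : ∑ j ∈ A.proxSet i, A.m j
      = ∑ k ∈ Finset.univ, (if A.toToricConstellation.Prox k i then A.m k else 0) := by
    rw [proxSet, Finset.sum_filter]
  have hX : (∑ j ∈ A.proxSet i, ∑ k ∈ (A.proxSet i).filter
        (fun k => LinProx A.toToricConstellation k j), A.m k)
      = ∑ k ∈ Finset.univ, (if A.toToricConstellation.Prox k i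
          then (((A.proxSet i).filter
            (fun j => A.toToricConstellation.LinProx k j)).card : ℤ) * A.m k
          else 0) := by
    have h1 : ∀ j, ∑ k ∈ (A.proxSet i).filter (fun k => LinProx A.toToricConstellation k j), A.m k
        = ∑ k ∈ Finset.univ, if A.toToricConstellation.Prox k i
            ∧ A.toToricConstellation.LinProx k j then A.m k else 0 := by
      intro j
      rw [proxSet, Finset.filter_filter, Finset.sum_filter]
    rw [Finset.sum_congr rfl (fun j _ => h1 j), Finset.sum_comm]
    refine Finset.sum_congr rfl (fun k _ => ?_)
    by_cases hPk : A.toToricConstellation.Prox k i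
    · rw [if_pos hPk,
        Finset.sum_congr rfl (fun j _ => by simp only [hPk, true_and] :
          ∀ j ∈ A.proxSet i, (if A.toToricConstellation.Prox k i
            ∧ A.toToricConstellation.LinProx k j then A.m k else 0)
          = (if A.toToricConstellation.LinProx k j then A.m k else 0)),
        ← Finset.sum_filter, Finset.sum_const, nsmul_eq_mul]
    · rw [if_neg hPk]
      refine Finset.sum_eq_zero (fun j _ => ?_)
      simp [hPk]
  have hY : (∑ j ∈ A.Bset i, ∑ k ∈ (A.proxSet j).filter
        (fun k => LinProx A.toToricConstellation k i), A.m k)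
      = ∑ k ∈ Finset.univ, (if A.toToricConstellation.LinProx k i
          then (((A.Bset i).filter
            (fun j => A.toToricConstellation.Prox k j)).card : ℤ) * A.m k
          else 0) := by
    have h1 : ∀ j, ∑ k ∈ (A.proxSet j).filter (fun k => LinProx A.toToricConstellation k i), A.m k
        = ∑ k ∈ Finset.univ, if A.toToricConstellation.Prox k j
            ∧ A.toToricConstellation.LinProx k i then A.m k else 0 := by
      intro j
      rw [proxSet, Finset.filter_filter, Finset.sum_filter]
    rw [Finset.sum_congr rfl (fun j _ => h1 j), Finset.sum_comm]
    refine Finset.sum_congr rfl (fun k _ => ?_)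
    by_cases hLk : A.toToricConstellation.LinProx k i
    · rw [if_pos hLk,
        Finset.sum_congr rfl (fun j _ => by simp only [hLk, and_true] :
          ∀ j ∈ A.Bset i, (if A.toToricConstellation.Prox k j
            ∧ A.toToricConstellation.LinProx k i then A.m k else 0)
          = (if A.toToricConstellation.Prox k j then A.m k else 0)),
        ← Finset.sum_filter, Finset.sum_const, nsmul_eq_mul]
    · rw [if_neg hLk]
      refine Finset.sum_eq_zero (fun j _ => ?_)
      simp [hLk]
  have hM : ∀ a b : Fin 3, A.M i a b = ∑ k ∈ Finset.univ,
      (if A.toToricConstellation.inChain i a b k = true then A.m k else 0) := by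
    intro a b
    rw [M, Finset.sum_filter]
  have hZ : ∀ (c : Prop) [Decidable c] (a b a' b' : Fin 3),
      (if c then A.M i a b + A.M i a' b' else 0)
      = ∑ k ∈ Finset.univ, (if c then
          ((if A.toToricConstellation.inChain i a b k = true then A.m k else 0)
            + (if A.toToricConstellation.inChain i a' b' k = true then A.m k else 0)) else 0) := by
    intro c _ a b a' b'
    by_cases hc : c
    · simp only [if_pos hc]
      rw [hM, hM, ← Finset.sum_add_distrib]
    · simp [hc]
  -- summed per-node identity
  have hkey := Finset.sum_congr rfl (fun k (_ : k ∈ (Finset.univ : Finset (Fin r))) => A.perNode i k)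
  rw [Finset.sum_add_distrib, Finset.sum_add_distrib, Finset.sum_add_distrib,
    Finset.sum_add_distrib, ← Finset.mul_sum] at hkey
  -- the constant sum on the right
  have hB : ∑ _j ∈ A.Bset i, A.m i = ((A.Bset i).card : ℤ) * A.m i := by
    rw [Finset.sum_const, nsmul_eq_mul]
  have hBS : ((A.Bset i).card : ℤ) = ((A.toToricConstellation.labelsUnder i).card : ℤ) := by
    rw [A.Bcard_eq i]
  rw [hR, hmi, hX, hY, hZ _ 0 1 1 0, hZ _ 0 2 2 0, hZ _ 1 2 2 1, hP2, hB, hBS]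
  linarith [hkey]
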